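/- Fix a real number ε with 0 < ε < √2. For each integer ℓ ≥ 1 let N(ℓ) be the number of integers m with -ℓ ≤ m ≤ ℓ and |m|·√(2/(ℓ(ℓ+1))) > ε, and set ϱ(ℓ, ε) = N(ℓ)/(2ℓ). Then ϱ(ℓ, ε) tends to 1 - ε/√2 as ℓ → ∞. -/

import Mathlib

open Filter Real

/-- Fix `0 < ε < √2`. For each `ℓ ≥ 1` let `N(ℓ)` be the number of integers `m`
with `-ℓ ≤ m ≤ ℓ` and `|m|·√(2/(ℓ(ℓ+1))) > ε`, and `ϱ(ℓ,ε) = N(ℓ)/(2ℓ)`. Then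
`ϱ(ℓ,ε) → 1 - ε/√2` as `ℓ → ∞`. -/
theorem stmt_6 (ε : ℝ) (hε0 : 0 < ε) (hε2 : ε < Real.sqrt 2) :
    Filter.Tendsto (fun ℓ : ℕ =>
      (({m : ℤ | -(ℓ : ℤ) ≤ m ∧ m ≤ (ℓ : ℤ) ∧
          ε < |(m : ℝ)| * Real.sqrt (2 / ((ℓ : ℝ) * ((ℓ : ℝ) + 1)))}.ncard : ℝ))
        / (2 * (ℓ : ℝ)))
      Filter.atTop (nhds (1 - ε / Real.sqrt 2)) := by
  have h2 : (0:ℝ) < Real.sqrt 2 := Real.sqrt_pos.2 (by norm_num)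
  set t : ℕ → ℝ := fun ℓ => ε / Real.sqrt (2 / ((ℓ:ℝ) * ((ℓ:ℝ) + 1))) with ht
  -- Step 1: t ℓ / ℓ equals (ε/√2)·√(1+1/ℓ) eventually
  have hteq : ∀ᶠ ℓ : ℕ in atTop,
      t ℓ / ℓ = (ε / Real.sqrt 2) * Real.sqrt (1 + 1/(ℓ:ℝ)) := by
    filter_upwards [eventually_ge_atTop 1] with ℓ hℓ
    have hL : (0:ℝ) < ℓ := by exact_mod_cast hℓ
    have hr : Real.sqrt (2 / ((ℓ:ℝ) * ((ℓ:ℝ)+1)))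
        = Real.sqrt 2 / Real.sqrt ((ℓ:ℝ)*((ℓ:ℝ)+1)) :=
      Real.sqrt_div (by norm_num) _
    have hfac : (ℓ:ℝ) * ((ℓ:ℝ)+1) = (ℓ:ℝ)^2 * (1 + 1/(ℓ:ℝ)) := by
      field_simp
    have hs : Real.sqrt ((ℓ:ℝ)*((ℓ:ℝ)+1)) = (ℓ:ℝ) * Real.sqrt (1 + 1/(ℓ:ℝ)) := by
      rw [hfac, Real.sqrt_mul (sq_nonneg _), Real.sqrt_sq hL.le]
    have hsq : (0:ℝ) < Real.sqrt (1 + 1/(ℓ:ℝ)) := Real.sqrt_pos.2 (by positivity)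
    rw [ht]
    simp only
    rw [hr, hs]
    field_simp
  have hlim1 : Tendsto (fun ℓ : ℕ => t ℓ / ℓ) atTop (nhds (ε / Real.sqrt 2)) := by
    have h0 : Tendsto (fun ℓ:ℕ => 1 + 1/(ℓ:ℝ)) atTop (nhds 1) := by
      have : Tendsto (fun n : ℕ => 1 / (n:ℝ)) atTop (nhds 0) := tendsto_one_div_atTop_nhds_zero_nat
      simpa using tendsto_const_nhds.add this
    have hsq : Tendsto (fun ℓ:ℕ => Real.sqrt (1 + 1/(ℓ:ℝ))) atTop (nhds 1) := by
      have := (Real.continuous_sqrt.tendsto 1).comp h0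
      simpa [Function.comp_def] using this
    have hmul : Tendsto (fun ℓ:ℕ => (ε / Real.sqrt 2) * Real.sqrt (1 + 1/(ℓ:ℝ)))
        atTop (nhds (ε / Real.sqrt 2)) := by
      have := hsq.const_mul (ε / Real.sqrt 2)
      simpa using this
    exact Tendsto.congr' (hteq.mono fun _ h => h.symm) hmul
  -- Step 2: squeeze for floor
  have hg : Tendsto (fun ℓ : ℕ => ((⌊t ℓ⌋ : ℝ) / ℓ)) atTop (nhds (ε / Real.sqrt 2)) := by
    have hlow : Tendsto (fun ℓ : ℕ => t ℓ / ℓ - 1/(ℓ:ℝ)) atTop (nhds (ε / Real.sqrt 2)) := by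
      have := hlim1.sub tendsto_one_div_atTop_nhds_zero_nat
      simpa using this
    refine tendsto_of_tendsto_of_tendsto_of_le_of_le' hlow hlim1 ?_ ?_
    · filter_upwards [eventually_ge_atTop 1] with ℓ hℓ
      have hL : (0:ℝ) < ℓ := by exact_mod_cast hℓ
      rw [div_sub_div_same] at *
      have h1 : t ℓ - 1 ≤ (⌊t ℓ⌋ : ℝ) := (Int.sub_one_lt_floor _).le
      rw [← div_sub_div_same]
      calc t ℓ / ℓ - 1/(ℓ:ℝ) = (t ℓ - 1)/ℓ := by ring
        _ ≤ (⌊t ℓ⌋ : ℝ) / ℓ := by gcongr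
    · filter_upwards [eventually_ge_atTop 1] with ℓ hℓ
      have hL : (0:ℝ) < ℓ := by exact_mod_cast hℓ
      have h1 : (⌊t ℓ⌋ : ℝ) ≤ t ℓ := Int.floor_le _
      gcongr
  -- Step 3: eventual equality of the ratio with 1 - ⌊t ℓ⌋/ℓ
  have hev : ∀ᶠ ℓ : ℕ in atTop,
      (({m : ℤ | -(ℓ : ℤ) ≤ m ∧ m ≤ (ℓ : ℤ) ∧
          ε < |(m : ℝ)| * Real.sqrt (2 / ((ℓ : ℝ) * ((ℓ : ℝ) + 1)))}.ncard : ℝ))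
        / (2 * (ℓ : ℝ)) = 1 - (⌊t ℓ⌋ : ℝ) / ℓ := by
    filter_upwards [eventually_ge_atTop 1] with ℓ hℓ
    have hL : (0:ℝ) < ℓ := by exact_mod_cast hℓ
    have rpos : (0:ℝ) < Real.sqrt (2 / ((ℓ:ℝ) * ((ℓ:ℝ)+1))) :=
      Real.sqrt_pos.2 (by positivity)
    set k : ℤ := ⌊t ℓ⌋ with hk
    have ht0 : 0 ≤ t ℓ := div_nonneg hε0.le (Real.sqrt_nonneg _)
    have hk0 : 0 ≤ k := Int.floor_nonneg.2 ht0
    -- t ℓ < ℓ + 1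
    have htlt : t ℓ < (ℓ:ℝ) + 1 := by
      have hr : Real.sqrt (2 / ((ℓ:ℝ) * ((ℓ:ℝ)+1)))
          = Real.sqrt 2 / Real.sqrt ((ℓ:ℝ)*((ℓ:ℝ)+1)) :=
        Real.sqrt_div (by norm_num) _
      have hspos : (0:ℝ) < Real.sqrt ((ℓ:ℝ)*((ℓ:ℝ)+1)) := Real.sqrt_pos.2 (by positivity)
      have h1 : t ℓ < Real.sqrt 2 / Real.sqrt (2 / ((ℓ:ℝ) * ((ℓ:ℝ)+1))) := by
        rw [ht]; simp only
        gcongr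
      have heq : Real.sqrt 2 / Real.sqrt (2 / ((ℓ:ℝ) * ((ℓ:ℝ)+1)))
          = Real.sqrt ((ℓ:ℝ)*((ℓ:ℝ)+1)) := by
        rw [hr]; field_simp
      have h3 : Real.sqrt ((ℓ:ℝ)*((ℓ:ℝ)+1)) ≤ (ℓ:ℝ) + 1 := by
        have h4 := Real.sqrt_le_sqrt (show (ℓ:ℝ)*((ℓ:ℝ)+1) ≤ ((ℓ:ℝ)+1)^2 by nlinarith)
        rwa [Real.sqrt_sq (by linarith : (0:ℝ) ≤ (ℓ:ℝ)+1)] at h4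
      rw [heq] at h1
      linarith
    have hkℓ : k ≤ (ℓ:ℤ) := by
      have h1 : (k:ℝ) ≤ t ℓ := Int.floor_le _
      have h2' : (k:ℝ) < (ℓ:ℝ) + 1 := lt_of_le_of_lt h1 htlt
      have : (k:ℤ) < (ℓ:ℤ) + 1 := by exact_mod_cast h2'
      omega
    have hset : {m : ℤ | -(ℓ : ℤ) ≤ m ∧ m ≤ (ℓ : ℤ) ∧
          ε < |(m : ℝ)| * Real.sqrt (2 / ((ℓ : ℝ) * ((ℓ : ℝ) + 1)))}
        = ↑(Finset.Icc (-(ℓ:ℤ)) (ℓ:ℤ) \ Finset.Icc (-k) k) := by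
      ext m
      simp only [Set.mem_setOf_eq, Finset.coe_sdiff, Set.mem_diff, Finset.coe_Icc,
        Set.mem_Icc]
      have habs : ε < |(m:ℝ)| * Real.sqrt (2 / ((ℓ:ℝ) * ((ℓ:ℝ)+1))) ↔ k < |m| := by
        rw [← Int.cast_abs, ← div_lt_iff₀ rpos]
        exact Int.floor_lt.symm
      constructor
      · rintro ⟨h1, h2', h3⟩
        refine ⟨⟨h1, h2'⟩, fun hc => ?_⟩
        rw [habs] at h3
        have : |m| ≤ k := abs_le.2 hc
        omega
      · rintro ⟨⟨h1, h2'⟩, hc⟩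
        refine ⟨h1, h2', habs.2 ?_⟩
        by_contra hlt
        push_neg at hlt
        exact hc (abs_le.1 hlt)
    have hsub : Finset.Icc (-k) k ⊆ Finset.Icc (-(ℓ:ℤ)) (ℓ:ℤ) :=
      Finset.Icc_subset_Icc (by omega) (by omega)
    have hcardZ : (((Finset.Icc (-(ℓ:ℤ)) (ℓ:ℤ) \ Finset.Icc (-k) k).card : ℕ) : ℤ)
        = 2*(ℓ:ℤ) - 2*k := by
      rw [Finset.card_sdiff_of_subset hsub, Int.card_Icc, Int.card_Icc]
      omega
    rw [hset, Set.ncard_coe_finset]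
    have hcardR : (((Finset.Icc (-(ℓ:ℤ)) (ℓ:ℤ) \ Finset.Icc (-k) k).card : ℕ) : ℝ)
        = 2*(ℓ:ℝ) - 2*(k:ℝ) := by exact_mod_cast hcardZ
    rw [hcardR]
    field_simp
  have hfinal : Tendsto (fun ℓ : ℕ => 1 - (⌊t ℓ⌋ : ℝ) / ℓ) atTop
      (nhds (1 - ε / Real.sqrt 2)) := tendsto_const_nhds.sub hg
  exact Tendsto.congr' (hev.mono fun _ h => h.symm) hfinal
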